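/- Let G^{B₁} be an (n₁,k₁,l₁,λ₁)-GC and G^{B₂} be an (n₂,k₂,l₂,λ₂)-GC with l₁ > λ₁ ≥ 0 and l₂ > λ₂ ≥ 0. Then for every integer 0 ≤ s ≤ n₁n₂, err(G^{B₁} ⊗ G^{B₂}, s) ≤ 1 − (l₁l₂)²(n₁n₂ − s)/(k₁k₂(d + λ₁λ₂(n₁n₂ − s))), where d = (l₁−λ₁)(l₂−λ₂) + n₂(l₁λ₂ − λ₁λ₂) + n₁(λ₁l₂ − λ₁λ₂). -/

import Mathlib

open Kronecker

/-- The optimal squared decoding error of a gradient code `G` on the set `U` of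
non-straggling columns: `inf_v ‖G_U v − 1‖₂²`. -/
noncomputable def sqErr {K N : Type*} [Fintype K] (G : Matrix K N ℝ) (U : Finset N) : ℝ :=
  ⨅ v : {j // j ∈ U} → ℝ, ∑ i : K, ((∑ j ∈ U.attach, G i j.1 * v j) - 1) ^ 2

/-- The normalized worst-case squared error of a gradient code `G` with `s`
stragglers: `(1/k) · max_{|U| = n − s} inf_v ‖G_U v − 1‖₂²`. -/
noncomputable def err {K N : Type*} [Fintype K] [Fintype N]
    (G : Matrix K N ℝ) (s : ℕ) : ℝ :=
  (1 / (Fintype.card K : ℝ)) *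
    ⨆ U : {U : Finset N // U.card = Fintype.card N - s}, sqErr G U.1

lemma quad_min (K B A : ℝ) (hA : A ≠ 0) :
    (B / A) ^ 2 * A - 2 * (B / A) * B + K = K - B ^ 2 / A := by
  field_simp; ring

lemma sqErr_le {K N : Type*} [Fintype K] (G : Matrix K N ℝ) (U : Finset N) (c : ℝ) :
    sqErr G U ≤ ∑ i : K, ((∑ j ∈ U.attach, G i j.1 * c) - 1) ^ 2 :=
  ciInf_le ⟨0, by rintro x ⟨v, rfl⟩; positivity⟩ (fun _ => c)

set_option maxHeartbeats 2000000 in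
/-- for an `(n₁,k₁,l₁,λ₁)`-GC and an `(n₂,k₂,l₂,λ₂)`-GC with
`l₁ > λ₁ ≥ 0` and `l₂ > λ₂ ≥ 0`, the normalized worst-case squared error of their
Kronecker product with `0 ≤ s ≤ n₁n₂` stragglers is at most
`1 − (l₁l₂)²(n₁n₂ − s)/(k₁k₂(d + λ₁λ₂(n₁n₂ − s)))` with
`d = (l₁−λ₁)(l₂−λ₂) + n₂(l₁λ₂ − λ₁λ₂) + n₁(λ₁l₂ − λ₁λ₂)`. -/
theorem stmt11 (n₁ k₁ l₁ lam₁ n₂ k₂ l₂ lam₂ : ℕ)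
    (hl₁ : lam₁ < l₁) (hl₂ : lam₂ < l₂)
    (G₁ : Matrix (Fin k₁) (Fin n₁) ℝ) (G₂ : Matrix (Fin k₂) (Fin n₂) ℝ)
    (hbin₁ : ∀ i j, G₁ i j = 0 ∨ G₁ i j = 1)
    (hcol₁ : ∀ j, ∑ i : Fin k₁, G₁ i j = (l₁ : ℝ))
    (hint₁ : ∀ j j' : Fin n₁, j ≠ j' → ∑ i : Fin k₁, G₁ i j * G₁ i j' = (lam₁ : ℝ))
    (hbin₂ : ∀ i j, G₂ i j = 0 ∨ G₂ i j = 1)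
    (hcol₂ : ∀ j, ∑ i : Fin k₂, G₂ i j = (l₂ : ℝ))
    (hint₂ : ∀ j j' : Fin n₂, j ≠ j' → ∑ i : Fin k₂, G₂ i j * G₂ i j' = (lam₂ : ℝ))
    (s : ℕ) (hs : s ≤ n₁ * n₂)
    (d : ℝ)
    (hd : d = ((l₁ : ℝ) - lam₁) * ((l₂ : ℝ) - lam₂)
      + (n₂ : ℝ) * ((l₁ : ℝ) * lam₂ - (lam₁ : ℝ) * lam₂)
      + (n₁ : ℝ) * ((lam₁ : ℝ) * l₂ - (lam₁ : ℝ) * lam₂)) :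
    err (G₁ ⊗ₖ G₂) s
      ≤ 1 - ((l₁ : ℝ) * l₂) ^ 2 * ((n₁ : ℝ) * n₂ - s) /
          ((k₁ : ℝ) * k₂ * (d + (lam₁ : ℝ) * lam₂ * ((n₁ : ℝ) * n₂ - s))) := by
  classical
  have hl1R : (lam₁ : ℝ) < l₁ := by exact_mod_cast hl₁
  have hl2R : (lam₂ : ℝ) < l₂ := by exact_mod_cast hl₂
  have hlam1 : (0:ℝ) ≤ lam₁ := Nat.cast_nonneg _
  have hlam2 : (0:ℝ) ≤ lam₂ := Nat.cast_nonneg _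
  have hcardN : Fintype.card (Fin n₁ × Fin n₂) = n₁ * n₂ := by simp
  have hcardK : Fintype.card (Fin k₁ × Fin k₂) = k₁ * k₂ := by simp
  set m : ℕ := n₁ * n₂ - s with hm
  have hmR : (m : ℝ) = (n₁:ℝ) * n₂ - s := by
    rw [hm, Nat.cast_sub hs]; push_cast; ring
  have hne : Nonempty {U : Finset (Fin n₁ × Fin n₂) //
      U.card = Fintype.card (Fin n₁ × Fin n₂) - s} := by
    obtain ⟨t, _, ht⟩ := Finset.exists_subset_card_eq (s := (Finset.univ : Finset (Fin n₁ × Fin n₂)))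
      (n := Fintype.card (Fin n₁ × Fin n₂) - s)
      (by rw [Finset.card_univ]; exact Nat.sub_le _ _)
    exact ⟨⟨t, ht⟩⟩
  by_cases hk : k₁ * k₂ = 0
  · have herr0 : err (G₁ ⊗ₖ G₂) s = 0 := by
      simp only [err, hcardK, hk]; norm_num
    have hkR : (k₁:ℝ) * k₂ = 0 := by exact_mod_cast hk
    rw [herr0, hkR, zero_mul, div_zero]
    norm_num
  -- k positive
  have hkpos : 0 < k₁ * k₂ := Nat.pos_of_ne_zero hk
  have hkRpos : (0:ℝ) < (k₁:ℝ) * k₂ := by exact_mod_cast hkpos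
  -- column sums of the Kronecker product
  have hdiag₁ : ∀ j, ∑ i, G₁ i j * G₁ i j = (l₁:ℝ) := by
    intro j; rw [← hcol₁ j]
    exact Finset.sum_congr rfl fun i _ => by rcases hbin₁ i j with h | h <;> rw [h] <;> ring
  have hdiag₂ : ∀ j, ∑ i, G₂ i j * G₂ i j = (l₂:ℝ) := by
    intro j; rw [← hcol₂ j]
    exact Finset.sum_congr rfl fun i _ => by rcases hbin₂ i j with h | h <;> rw [h] <;> ring
  have hcolK : ∀ j : Fin n₁ × Fin n₂,
      ∑ i : Fin k₁ × Fin k₂, (G₁ ⊗ₖ G₂) i j = (l₁:ℝ) * l₂ := by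
    intro j
    rw [Fintype.sum_prod_type]
    simp only [Matrix.kroneckerMap_apply]
    rw [← hcol₁ j.1, ← hcol₂ j.2, Finset.sum_mul_sum]
  have hQ : ∀ j j' : Fin n₁ × Fin n₂,
      ∑ i : Fin k₁ × Fin k₂, (G₁ ⊗ₖ G₂) i j * (G₁ ⊗ₖ G₂) i j'
        = (if j.1 = j'.1 then (l₁:ℝ) else lam₁) * (if j.2 = j'.2 then (l₂:ℝ) else lam₂) := by
    intro j j'
    rw [Fintype.sum_prod_type]
    simp only [Matrix.kroneckerMap_apply]
    have h1 : ∀ i₁ : Fin k₁, ∀ i₂ : Fin k₂,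
        (G₁ i₁ j.1 * G₂ i₂ j.2) * (G₁ i₁ j'.1 * G₂ i₂ j'.2)
          = (G₁ i₁ j.1 * G₁ i₁ j'.1) * (G₂ i₂ j.2 * G₂ i₂ j'.2) := by intros; ring
    rw [Finset.sum_congr rfl fun i₁ _ => Finset.sum_congr rfl fun i₂ _ => h1 i₁ i₂,
      ← Finset.sum_mul_sum]
    congr 1
    · split_ifs with h
      · rw [h]; exact hdiag₁ _
      · exact hint₁ _ _ h
    · split_ifs with h
      · rw [h]; exact hdiag₂ _
      · exact hint₂ _ _ h
  by_cases hm0 : m = 0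
  · -- s = n₁ * n₂, the only U is ∅, err ≤ 1 and RHS = 1
    have hsM : (n₁:ℝ) * n₂ - s = 0 := by rw [← hmR, hm0]; norm_num
    simp only [hsM, mul_zero, add_zero, zero_div, sub_zero]
    unfold err
    rw [hcardK]
    have hkR' : (0:ℝ) < ((k₁ * k₂ : ℕ) : ℝ) := by exact_mod_cast hkpos
    rw [mul_comm, mul_one_div, div_le_one hkR']
    haveI := hne
    apply ciSup_le
    intro U
    refine (sqErr_le _ _ 0).trans ?_
    simp [Finset.card_univ]
  -- main case : m ≥ 1
  have hm1 : 1 ≤ m := Nat.one_le_iff_ne_zero.mpr hm0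
  have hmRpos : (0:ℝ) < m := by exact_mod_cast hm1
  have hdpos : 0 < d + (lam₁:ℝ) * lam₂ * m := by
    have h1 : (0:ℝ) ≤ (n₂:ℝ) * ((l₁:ℝ) * lam₂ - lam₁ * lam₂) := by
      have : (0:ℝ) ≤ (l₁:ℝ) * lam₂ - lam₁ * lam₂ := by nlinarith
      positivity
    have h2 : (0:ℝ) ≤ (n₁:ℝ) * ((lam₁:ℝ) * l₂ - lam₁ * lam₂) := by
      have : (0:ℝ) ≤ (lam₁:ℝ) * l₂ - lam₁ * lam₂ := by nlinarith
      positivity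
    nlinarith [mul_nonneg (mul_nonneg hlam1 hlam2) hmRpos.le]
  set A₀ : ℝ := (m:ℝ) * (d + (lam₁:ℝ) * lam₂ * m) with hA₀
  have hA₀pos : 0 < A₀ := mul_pos hmRpos hdpos
  set B : ℝ := (m:ℝ) * ((l₁:ℝ) * l₂) with hB
  set c : ℝ := B / A₀ with hc
  -- per-U bound
  have hUbound : ∀ U : Finset (Fin n₁ × Fin n₂), U.card = m →
      sqErr (G₁ ⊗ₖ G₂) U ≤ (k₁:ℝ) * k₂ - B ^ 2 / A₀ := by
    intro U hU
    refine (sqErr_le _ U c).trans ?_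
    set G := G₁ ⊗ₖ G₂ with hG
    set r : Fin k₁ × Fin k₂ → ℝ := fun i => ∑ j ∈ U.attach, G i j.1 with hr
    have hsum : ∀ i, ∑ j ∈ U.attach, G i j.1 * c = r i * c := by
      intro i; rw [hr]; rw [← Finset.sum_mul]
    have expand : ∑ i, ((∑ j ∈ U.attach, G i j.1 * c) - 1) ^ 2
        = c ^ 2 * (∑ i, (r i) ^ 2) - 2 * c * (∑ i, r i) + ((k₁:ℝ) * k₂) := by
      have h2 : ∀ i : Fin k₁ × Fin k₂, ((∑ j ∈ U.attach, G i j.1 * c) - 1) ^ 2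
          = c ^ 2 * (r i) ^ 2 - 2 * c * (r i) + 1 := by
        intro i; rw [hsum i]; ring
      rw [Finset.sum_congr rfl fun i _ => h2 i, Finset.sum_add_distrib,
        Finset.sum_sub_distrib, ← Finset.mul_sum, ← Finset.mul_sum, Finset.sum_const,
        Finset.card_univ, hcardK]
      push_cast; ring
    rw [expand]
    -- value of B
    have hBsum : ∑ i, r i = B := by
      rw [hr, Finset.sum_comm]
      rw [Finset.sum_congr rfl fun j _ => hcolK j.1]
      rw [Finset.sum_const, Finset.card_attach, hU, hB, nsmul_eq_mul]
    -- bound on A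
    have hAexp : ∑ i, (r i) ^ 2 = ∑ j ∈ U.attach, ∑ j' ∈ U.attach,
        (if j.1.1 = j'.1.1 then (l₁:ℝ) else lam₁) * (if j.1.2 = j'.1.2 then (l₂:ℝ) else lam₂) := by
      have h3 : ∀ i : Fin k₁ × Fin k₂, (r i) ^ 2 = ∑ j ∈ U.attach, ∑ j' ∈ U.attach,
          G i j.1 * G i j'.1 := by
        intro i; rw [hr, pow_two, Finset.sum_mul_sum]
      rw [Finset.sum_congr rfl fun i _ => h3 i, Finset.sum_comm]
      refine Finset.sum_congr rfl fun j _ => ?_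
      rw [Finset.sum_comm]
      exact Finset.sum_congr rfl fun j' _ => hQ j.1 j'.1
    have hAle : ∑ i, (r i) ^ 2 ≤ A₀ := by
      rw [hAexp]
      -- pointwise decomposition
      have hpt : ∀ j j' : {x // x ∈ U},
          (if j.1.1 = j'.1.1 then (l₁:ℝ) else lam₁) * (if j.1.2 = j'.1.2 then (l₂:ℝ) else lam₂)
          = (lam₁:ℝ) * lam₂
            + (lam₁:ℝ) * ((l₂:ℝ) - lam₂) * (if j.1.2 = j'.1.2 then (1:ℝ) else 0)
            + (lam₂:ℝ) * ((l₁:ℝ) - lam₁) * (if j.1.1 = j'.1.1 then (1:ℝ) else 0)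
            + ((l₁:ℝ) - lam₁) * ((l₂:ℝ) - lam₂) *
              ((if j.1.1 = j'.1.1 then (1:ℝ) else 0) * (if j.1.2 = j'.1.2 then (1:ℝ) else 0)) := by
        intro j j'; split_ifs <;> ring
      rw [Finset.sum_congr rfl fun j _ => Finset.sum_congr rfl fun j' _ => hpt j j']
      simp only [Finset.sum_add_distrib, ← Finset.mul_sum]
      -- counting bounds
      have hcount₂ : ∀ j : {x // x ∈ U},
          ∑ j' ∈ U.attach, (if j.1.2 = j'.1.2 then (1:ℝ) else 0) ≤ (n₁:ℝ) := by
        intro j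
        rw [Finset.sum_boole]
        have : (U.attach.filter fun j' => j.1.2 = j'.1.2).card ≤ n₁ := by
          have := Finset.card_le_card_of_injOn (f := fun x : {x // x ∈ U} => x.1.1)
            (s := U.attach.filter fun j' => j.1.2 = j'.1.2) (t := Finset.univ)
            (fun a _ => Finset.mem_univ _) ?_
          · simpa using this
          · intro a ha b hb hab
            simp only [Finset.coe_filter, Set.mem_setOf_eq] at ha hb
            exact Subtype.ext (Prod.ext hab (ha.2.symm.trans hb.2))
        exact_mod_cast this
      have hcount₁ : ∀ j : {x // x ∈ U},
          ∑ j' ∈ U.attach, (if j.1.1 = j'.1.1 then (1:ℝ) else 0) ≤ (n₂:ℝ) := by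
        intro j
        rw [Finset.sum_boole]
        have : (U.attach.filter fun j' => j.1.1 = j'.1.1).card ≤ n₂ := by
          have := Finset.card_le_card_of_injOn (f := fun x : {x // x ∈ U} => x.1.2)
            (s := U.attach.filter fun j' => j.1.1 = j'.1.1) (t := Finset.univ)
            (fun a _ => Finset.mem_univ _) ?_
          · simpa using this
          · intro a ha b hb hab
            simp only [Finset.coe_filter, Set.mem_setOf_eq] at ha hb
            exact Subtype.ext (Prod.ext (ha.2.symm.trans hb.2) hab)
        exact_mod_cast this
      have hdelta : ∀ j j' : {x // x ∈ U},
          (if j.1.1 = j'.1.1 then (1:ℝ) else 0) * (if j.1.2 = j'.1.2 then (1:ℝ) else 0)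
            = if j = j' then (1:ℝ) else 0 := by
        intro j j'
        by_cases h : j = j'
        · subst h; simp
        · have h' : j.1.1 ≠ j'.1.1 ∨ j.1.2 ≠ j'.1.2 := by
            by_contra hcon; push_neg at hcon
            exact h (Subtype.ext (Prod.ext hcon.1 hcon.2))
          rcases h' with h' | h' <;> simp [h, h']
      -- compute the 4 sums
      have hE0 : ∑ _j ∈ U.attach, ∑ _j' ∈ U.attach, (lam₂:ℝ) = (m:ℝ) ^ 2 * lam₂ := by
        simp [Finset.sum_const, Finset.card_attach, hU]; ring
      have hE2 : ∑ j ∈ U.attach, ∑ j' ∈ U.attach,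
          (if j.1.2 = j'.1.2 then (1:ℝ) else 0) ≤ (m:ℝ) * n₁ := by
        calc ∑ j ∈ U.attach, ∑ j' ∈ U.attach, (if j.1.2 = j'.1.2 then (1:ℝ) else 0)
            ≤ ∑ _j ∈ U.attach, (n₁:ℝ) := Finset.sum_le_sum fun j _ => hcount₂ j
          _ = (m:ℝ) * n₁ := by
              rw [Finset.sum_const, Finset.card_attach, hU, nsmul_eq_mul]
      have hE1 : ∑ j ∈ U.attach, ∑ j' ∈ U.attach,
          (if j.1.1 = j'.1.1 then (1:ℝ) else 0) ≤ (m:ℝ) * n₂ := by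
        calc ∑ j ∈ U.attach, ∑ j' ∈ U.attach, (if j.1.1 = j'.1.1 then (1:ℝ) else 0)
            ≤ ∑ _j ∈ U.attach, (n₂:ℝ) := Finset.sum_le_sum fun j _ => hcount₁ j
          _ = (m:ℝ) * n₂ := by
              rw [Finset.sum_const, Finset.card_attach, hU, nsmul_eq_mul]
      have hE12 : ∑ j ∈ U.attach, ∑ j' ∈ U.attach,
          ((if j.1.1 = j'.1.1 then (1:ℝ) else 0) * (if j.1.2 = j'.1.2 then (1:ℝ) else 0))
          = (m:ℝ) := by
        rw [Finset.sum_congr rfl fun j _ => Finset.sum_congr rfl fun j' _ => hdelta j j']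
        have hone : ∀ j : {x // x ∈ U}, ∑ j' ∈ U.attach, (if j = j' then (1:ℝ) else 0) = 1 := by
          intro j
          rw [Finset.sum_ite_eq (U.attach) j (fun _ => (1:ℝ))]
          simp
        rw [Finset.sum_congr rfl fun j _ => hone j, Finset.sum_const, Finset.card_attach, hU,
          nsmul_eq_mul, mul_one]
      have hc2 : (0:ℝ) ≤ (lam₁:ℝ) * ((l₂:ℝ) - lam₂) := mul_nonneg hlam1 (sub_nonneg.2 hl2R.le)
      have hc1 : (0:ℝ) ≤ (lam₂:ℝ) * ((l₁:ℝ) - lam₁) := mul_nonneg hlam2 (sub_nonneg.2 hl1R.le)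
      have key : (lam₁:ℝ) * ((m:ℝ) ^ 2 * lam₂) + ((lam₁:ℝ) * ((l₂:ℝ) - lam₂)) * ((m:ℝ) * n₁)
          + ((lam₂:ℝ) * ((l₁:ℝ) - lam₁)) * ((m:ℝ) * n₂)
          + ((l₁:ℝ) - lam₁) * ((l₂:ℝ) - lam₂) * (m:ℝ) = A₀ := by
        rw [hA₀, hd]; ring
      rw [hE0, hE12]
      have b2 := mul_le_mul_of_nonneg_left hE2 hc2
      have b1 := mul_le_mul_of_nonneg_left hE1 hc1
      linarith [b1, b2, key]
    -- finish: c²A - 2cB + k ≤ c²A₀ - 2cB + k = k - B²/A₀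
    have step1 : c ^ 2 * (∑ i, (r i) ^ 2) ≤ c ^ 2 * A₀ :=
      mul_le_mul_of_nonneg_left hAle (sq_nonneg c)
    have step2 : c ^ 2 * A₀ - 2 * c * B + ((k₁:ℝ) * k₂) = (k₁:ℝ) * k₂ - B ^ 2 / A₀ := by
      rw [hc]; exact quad_min _ _ _ hA₀pos.ne'
    rw [hBsum]
    linarith [step1, step2]
  -- assemble
  unfold err
  rw [hcardK]
  have hsup : (⨆ U : {U : Finset (Fin n₁ × Fin n₂) //
        U.card = Fintype.card (Fin n₁ × Fin n₂) - s},
      sqErr (G₁ ⊗ₖ G₂) U.1) ≤ (k₁:ℝ) * k₂ - B ^ 2 / A₀ := by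
    haveI := hne
    apply ciSup_le
    intro U
    exact hUbound U.1 (by rw [U.2, hcardN])
  have hfinal : (1 / ((k₁ * k₂ : ℕ) : ℝ)) * ((k₁:ℝ) * k₂ - B ^ 2 / A₀)
      = 1 - ((l₁:ℝ) * l₂) ^ 2 * ((n₁:ℝ) * n₂ - s) /
          ((k₁:ℝ) * k₂ * (d + (lam₁:ℝ) * lam₂ * ((n₁:ℝ) * n₂ - s))) := by
    rw [← hmR, hB, hA₀]
    push_cast
    have hk1 : (k₁:ℝ) ≠ 0 := left_ne_zero_of_mul hkRpos.ne'
    have hk2 : (k₂:ℝ) ≠ 0 := right_ne_zero_of_mul hkRpos.ne'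
    have hd' := hdpos.ne'
    field_simp
  calc (1 / ((k₁ * k₂ : ℕ) : ℝ)) * ⨆ U : {U : Finset (Fin n₁ × Fin n₂) //
        U.card = Fintype.card (Fin n₁ × Fin n₂) - s}, sqErr (G₁ ⊗ₖ G₂) U.1
      ≤ (1 / ((k₁ * k₂ : ℕ) : ℝ)) * ((k₁:ℝ) * k₂ - B ^ 2 / A₀) :=
        mul_le_mul_of_nonneg_left hsup (by positivity)
    _ = _ := hfinal
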